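/- Let β be a positive natural number, L > 0, η = L/β, and let G = {zη + η/2 : z ∈ Z, −β ≤ z < β} be a regular grid on [−L, L) with an even number 2β of points. Let u : R → R be a step function supported on the grid cells (vanishing outside [−L, L)). Then the discrete L² Poincaré inequality holds: η Σ_{a∈G} |u(a)|² ≤ 4L² · η Σ_{a∈G} |D^η u(a)|², where D^η u(x) = (u(x+η) − u(x−η))/(2η), i.e., ‖u‖_{L²} ≤ 2L ‖D^η u‖_{L²}. -/
import Mathlib

/-- Telescoping sum over `Ico`. -/
lemma telescope_Ico (c : ℕ → ℝ) {m n : ℕ} (h : m ≤ n) :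
    ∑ k ∈ Finset.Ico m n, (c (k + 1) - c k) = c n - c m := by
  induction n, h using Nat.le_induction with
  | base => simp
  | succ n hn ih =>
      rw [Finset.sum_Ico_succ_top (by omega), ih]
      ring

/-- Discrete Poincaré inequality along a chain vanishing at the right end. -/
lemma chain_poincare (n : ℕ) (c : ℕ → ℝ) (hc : c n = 0) :
    ∑ j ∈ Finset.range n, (c j) ^ 2
      ≤ (n : ℝ) ^ 2 * ∑ j ∈ Finset.range n, (c (j + 1) - c j) ^ 2 := by
  have hbound : ∀ j ∈ Finset.range n,
      (c j) ^ 2 ≤ (n : ℝ) * ∑ k ∈ Finset.range n, (c (k + 1) - c k) ^ 2 := by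
    intro j hj
    rw [Finset.mem_range] at hj
    have htel : c j = -(∑ k ∈ Finset.Ico j n, (c (k + 1) - c k)) := by
      rw [telescope_Ico c hj.le, hc]; ring
    have hcs := sq_sum_le_card_mul_sum_sq
      (s := Finset.Ico j n) (f := fun k => c (k + 1) - c k)
    calc (c j) ^ 2 = (∑ k ∈ Finset.Ico j n, (c (k + 1) - c k)) ^ 2 := by
            rw [htel]; ring
      _ ≤ (Finset.Ico j n).card * ∑ k ∈ Finset.Ico j n, (c (k + 1) - c k) ^ 2 := hcs
      _ ≤ (n : ℝ) * ∑ k ∈ Finset.range n, (c (k + 1) - c k) ^ 2 := by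
          apply mul_le_mul
          · rw [Nat.card_Ico]; exact_mod_cast Nat.sub_le n j
          · apply Finset.sum_le_sum_of_subset_of_nonneg
            · intro k hk
              rw [Finset.mem_Ico] at hk
              exact Finset.mem_range.2 hk.2
            · intro _ _ _; positivity
          · positivity
          · positivity
  calc ∑ j ∈ Finset.range n, (c j) ^ 2
      ≤ ∑ j ∈ Finset.range n, (n : ℝ) * ∑ k ∈ Finset.range n, (c (k + 1) - c k) ^ 2 :=
        Finset.sum_le_sum hbound
    _ = (n : ℝ) ^ 2 * ∑ j ∈ Finset.range n, (c (j + 1) - c j) ^ 2 := by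
        rw [Finset.sum_const, Finset.card_range]; push_cast; ring

/-- Split a sum over `range (2 * n)` into even and odd indices. -/
lemma sum_range_two_mul (n : ℕ) (g : ℕ → ℝ) :
    ∑ i ∈ Finset.range (2 * n), g i
      = ∑ j ∈ Finset.range n, g (2 * j) + ∑ j ∈ Finset.range n, g (2 * j + 1) := by
  induction n with
  | zero => simp
  | succ n ih =>
      have h2 : 2 * (n + 1) = (2 * n + 1) + 1 := by ring
      rw [h2, Finset.sum_range_succ, Finset.sum_range_succ,
        Finset.sum_range_succ (fun j => g (2 * j)),
        Finset.sum_range_succ (fun j => g (2 * j + 1)), ih]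
      ring

/-- Reindex a sum over an integer interval to a sum over `range`. -/
lemma sum_Ico_int (n : ℕ) (g : ℤ → ℝ) :
    ∑ z ∈ Finset.Ico (-(n : ℤ)) (n : ℤ), g z
      = ∑ i ∈ Finset.range (2 * n), g (-(n : ℤ) + i) := by
  refine Finset.sum_nbij' (i := fun z => (z + (n : ℤ)).toNat)
    (j := fun i : ℕ => -(n : ℤ) + i) ?_ ?_ ?_ ?_ ?_
  · intro z hz; rw [Finset.mem_Ico] at hz
    show (z + (n : ℤ)).toNat ∈ Finset.range (2 * n)
    rw [Finset.mem_range]; omega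
  · intro i hi; rw [Finset.mem_range] at hi
    show -(n : ℤ) + i ∈ Finset.Ico (-(n : ℤ)) (n : ℤ)
    rw [Finset.mem_Ico]; omega
  · intro z hz; rw [Finset.mem_Ico] at hz
    show -(n : ℤ) + ((z + (n : ℤ)).toNat : ℤ) = z
    omega
  · intro i hi; rw [Finset.mem_range] at hi
    show (-(n : ℤ) + i + n).toNat = i
    omega
  · intro z hz; rw [Finset.mem_Ico] at hz
    show g z = g (-(n : ℤ) + ((z + (n : ℤ)).toNat : ℤ))
    congr 1; omega

/-- Discrete L² Poincaré inequality on the regular one-dimensional grid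
G = {zη + η/2 : −β ≤ z < β} of [−L,L) with mesh η = L/β:
‖u‖_{L²} ≤ 2L ‖D^η u‖_{L²} for step/grid functions vanishing off the grid. -/
theorem discrete_poincare_inequality_1d
    (β : ℕ) (hβ : 0 < β) (L η : ℝ) (hL : 0 < L) (hη : η = L / β)
    (u : ℝ → ℝ)
    (hsupp : ∀ x : ℝ,
      (∀ z : ℤ, -(β : ℤ) ≤ z → z < β → x ≠ z * η + η / 2) → u x = 0) :
    η * ∑ z ∈ Finset.Ico (-(β : ℤ)) (β : ℤ), (u ((z : ℝ) * η + η / 2)) ^ 2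
      ≤ 4 * L ^ 2 *
        (η * ∑ z ∈ Finset.Ico (-(β : ℤ)) (β : ℤ),
          ((u ((z : ℝ) * η + η / 2 + η) - u ((z : ℝ) * η + η / 2 - η)) / (2 * η)) ^ 2) := by
  have hβR : (0 : ℝ) < β := by exact_mod_cast hβ
  have hη0 : 0 < η := by rw [hη]; positivity
  have hLηβ : L = η * β := by rw [hη]; field_simp
  set V : ℤ → ℝ := fun z => u ((z : ℝ) * η + η / 2) with hV
  set W : ℤ → ℝ := fun z => V (z + 1) - V (z - 1) with hW
  -- V vanishes outside the index range
  have hV0 : ∀ z : ℤ, z < -(β : ℤ) ∨ (β : ℤ) ≤ z → V z = 0 := by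
    intro z hz
    apply hsupp
    intro z' hz1 hz2 heq
    have hzz : (z : ℝ) = (z' : ℝ) := by
      have := mul_right_cancel₀ (ne_of_gt hη0) (by linarith [heq] : (z : ℝ) * η = (z' : ℝ) * η)
      exact this
    have : z = z' := by exact_mod_cast hzz
    omega
  -- key combinatorial inequality
  have key : ∑ z ∈ Finset.Ico (-(β : ℤ)) (β : ℤ), (V z) ^ 2
      ≤ (β : ℝ) ^ 2 * ∑ z ∈ Finset.Ico (-(β : ℤ)) (β : ℤ), (W z) ^ 2 := by
    -- split into even and odd sublattices
    rw [sum_Ico_int β (fun z => (V z) ^ 2), sum_Ico_int β (fun z => (W z) ^ 2),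
      sum_range_two_mul, sum_range_two_mul]
    -- even chain: c j = V(-β + 2j), vanishing at j = β
    set c : ℕ → ℝ := fun j => V (-(β : ℤ) + 2 * j) with hc
    have hcβ : c β = 0 := hV0 _ (by right; omega)
    have h1 := chain_poincare β c hcβ
    have h1' : ∑ j ∈ Finset.range β, (c (j + 1) - c j) ^ 2
        = ∑ j ∈ Finset.range β, (W (-(β : ℤ) + (2 * j + 1))) ^ 2 := by
      apply Finset.sum_congr rfl
      intro j hj
      have e1 : (-(β : ℤ) + (2 * j + 1)) + 1 = -(β : ℤ) + 2 * (j + 1 : ℕ) := by push_cast; ring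
      have e2 : (-(β : ℤ) + (2 * j + 1)) - 1 = -(β : ℤ) + 2 * j := by push_cast; ring
      rw [hW]; simp only; rw [e1, e2]
    -- odd chain: c' j = V(β - 1 - 2j), vanishing at j = β
    set c' : ℕ → ℝ := fun j => V ((β : ℤ) - 1 - 2 * j) with hc'
    have hc'β : c' β = 0 := hV0 _ (by left; push_cast; omega)
    have h2 := chain_poincare β c' hc'β
    -- reindex odd V-sum : j ↦ β - 1 - j
    have h3 : ∑ j ∈ Finset.range β, (V (-(β : ℤ) + (2 * j + 1))) ^ 2
        = ∑ j ∈ Finset.range β, (c' j) ^ 2 := by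
      rw [← Finset.sum_range_reflect (fun j => (c' j) ^ 2) β]
      apply Finset.sum_congr rfl
      intro j hj
      rw [Finset.mem_range] at hj
      have : ((β - 1 - j : ℕ) : ℤ) = (β : ℤ) - 1 - j := by omega
      rw [hc']; simp only
      congr 2
      rw [this]; push_cast; ring
    -- reindex even W-sum : j ↦ β - 1 - j
    have h4 : ∑ j ∈ Finset.range β, (c' (j + 1) - c' j) ^ 2
        = ∑ j ∈ Finset.range β, (W (-(β : ℤ) + 2 * j)) ^ 2 := by
      rw [← Finset.sum_range_reflect (fun j => (W (-(β : ℤ) + 2 * j)) ^ 2) β]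
      apply Finset.sum_congr rfl
      intro j hj
      rw [Finset.mem_range] at hj
      have hcast : ((β - 1 - j : ℕ) : ℤ) = (β : ℤ) - 1 - j := by omega
      have e1 : (-(β : ℤ) + 2 * ((β - 1 - j : ℕ) : ℤ)) + 1 = (β : ℤ) - 1 - 2 * j := by
        rw [hcast]; ring
      have e2 : (-(β : ℤ) + 2 * ((β - 1 - j : ℕ) : ℤ)) - 1 = (β : ℤ) - 1 - 2 * (j + 1 : ℕ) := by
        rw [hcast]; push_cast; ring
      rw [hW, hc']; simp only
      rw [e1, e2]
      ring
    calc ∑ j ∈ Finset.range β, (V (-(β : ℤ) + 2 * j)) ^ 2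
          + ∑ j ∈ Finset.range β, (V (-(β : ℤ) + (2 * j + 1))) ^ 2
        = ∑ j ∈ Finset.range β, (c j) ^ 2 + ∑ j ∈ Finset.range β, (c' j) ^ 2 := by
          rw [h3]
      _ ≤ (β : ℝ) ^ 2 * ∑ j ∈ Finset.range β, (c (j + 1) - c j) ^ 2
          + (β : ℝ) ^ 2 * ∑ j ∈ Finset.range β, (c' (j + 1) - c' j) ^ 2 := by
          gcongr
      _ = (β : ℝ) ^ 2 * (∑ j ∈ Finset.range β, (W (-(β : ℤ) + 2 * j)) ^ 2
          + ∑ j ∈ Finset.range β, (W (-(β : ℤ) + (2 * j + 1))) ^ 2) := by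
          rw [h1', h4]; ring
  -- rewrite the RHS sum in terms of W
  have hRHS : ∑ z ∈ Finset.Ico (-(β : ℤ)) (β : ℤ),
        ((u ((z : ℝ) * η + η / 2 + η) - u ((z : ℝ) * η + η / 2 - η)) / (2 * η)) ^ 2
      = (1 / (2 * η)) ^ 2 * ∑ z ∈ Finset.Ico (-(β : ℤ)) (β : ℤ), (W z) ^ 2 := by
    rw [Finset.mul_sum]
    apply Finset.sum_congr rfl
    intro z hz
    have e1 : (z : ℝ) * η + η / 2 + η = ((z + 1 : ℤ) : ℝ) * η + η / 2 := by push_cast; ring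
    have e2 : (z : ℝ) * η + η / 2 - η = ((z - 1 : ℤ) : ℝ) * η + η / 2 := by push_cast; ring
    rw [hW, hV]; simp only
    rw [e1, e2]
    field_simp
  rw [hRHS]
  have hfinal : 4 * L ^ 2 * (η * ((1 / (2 * η)) ^ 2
      * ∑ z ∈ Finset.Ico (-(β : ℤ)) (β : ℤ), (W z) ^ 2))
      = η * ((β : ℝ) ^ 2 * ∑ z ∈ Finset.Ico (-(β : ℤ)) (β : ℤ), (W z) ^ 2) := by
    rw [hLηβ]
    field_simp
    ring
  rw [hfinal]
  exact mul_le_mul_of_nonneg_left key hη0.le
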